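/- Every network matrix is a tour matrix; more precisely, every network matrix admits a binet (bidirected graph) representation in which a chosen non-basic edge is a negative loop. -/

import Mathlib

/-- A matrix is (column-wise) the incidence matrix of a bidirected graph: every entry lies in
`{0, ±1, ±2}` and the absolute values of the entries of each column sum to at most `2`. -/
def IsBidirIncid {V E : Type*} [Fintype V] (M : Matrix V E ℝ) : Prop :=
  (∀ v e, M v e ∈ ({0, 1, -1, 2, -2} : Set ℝ)) ∧ ∀ e, (∑ v, |M v e|) ≤ 2

/-- A `{0, ±1}` matrix `B` is a tour matrix if there is a bidirected graph with incidence
matrix `[Q | S]` such that `Q * B = S` and `Q` has full row rank. -/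
def IsTourMatrix {m n : Type*} [Fintype m] [Fintype n] (B : Matrix m n ℝ) : Prop :=
  (∀ i j, B i j ∈ ({0, 1, -1} : Set ℝ)) ∧
  ∃ (V : Type) (_ : Fintype V) (_ : DecidableEq V) (Q : Matrix V m ℝ) (S : Matrix V n ℝ),
    IsBidirIncid Q ∧ IsBidirIncid S ∧ Q * B = S ∧ Q.rank = Fintype.card V

/-- The node-edge incidence matrix of a directed graph, given by its tail and head maps. -/
def digraphIncid {V E : Type*} [DecidableEq V] (tail head : E → V) : Matrix V E ℝ :=
  Matrix.of fun v e =>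
    if head e = tail e then 0
    else (if v = head e then 1 else 0) - (if v = tail e then 1 else 0)

section Helpers

variable {V E : Type*} [DecidableEq V] (tail head : E → V)

lemma digraphIncid_mem (v : V) (e : E) :
    digraphIncid tail head v e ∈ ({0, 1, -1} : Set ℝ) := by
  simp only [digraphIncid, Matrix.of_apply, Set.mem_insert_iff, Set.mem_singleton_iff]
  split_ifs <;> norm_num

lemma digraphIncid_sum [Fintype V] (e : E) :
    ∑ v, digraphIncid tail head v e = 0 := by
  by_cases h : head e = tail e
  · simp [digraphIncid, h]
  · simp [digraphIncid, h, Finset.sum_sub_distrib, Finset.sum_ite_eq', Finset.sum_ite_eq]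

lemma digraphIncid_abs_sum [Fintype V] (e : E) :
    ∑ v, |digraphIncid tail head v e| ≤ 2 := by
  by_cases h : head e = tail e
  · simp [digraphIncid, h]
  · calc ∑ v, |digraphIncid tail head v e|
        ≤ ∑ v, ((if v = head e then (1:ℝ) else 0) + (if v = tail e then 1 else 0)) := by
          refine Finset.sum_le_sum fun v _ => ?_
          simp only [digraphIncid, Matrix.of_apply, if_neg h]
          split_ifs <;> norm_num
    _ ≤ 2 := by
          rw [Finset.sum_add_distrib]
          simp only [Finset.sum_ite_eq', Finset.mem_univ, if_true]
          norm_num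

lemma det_key_fin :
    ∀ (r : ℕ) (f : Fin r → V) (g : Fin r → E),
      ((digraphIncid tail head).submatrix f g).det ∈ ({0, 1, -1} : Set ℝ) := by
  intro r
  induction r with
  | zero =>
      intro f g
      simp [Matrix.det_fin_zero]
  | succ r ih =>
      intro f g
      set A := (digraphIncid tail head).submatrix f g with hA
      have hmem : ∀ i j, A i j ∈ ({0, 1, -1} : Set ℝ) := fun i j =>
        digraphIncid_mem tail head (f i) (g j)
      by_cases hinj : Function.Injective f
      · by_cases hcols : ∀ j, ∃ i₁ i₂, i₁ ≠ i₂ ∧ A i₁ j ≠ 0 ∧ A i₂ j ≠ 0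
        · have hsum : ∀ j, ∑ i, A i j = 0 := by
            intro j
            obtain ⟨i₁, i₂, h12, hn1, hn2⟩ := hcols j
            have hht : head (g j) ≠ tail (g j) := by
              intro hh
              apply hn1
              simp [hA, digraphIncid, hh]
            have hform : ∀ i, A i j =
                (if f i = head (g j) then (1:ℝ) else 0) -
                (if f i = tail (g j) then 1 else 0) := by
              intro i
              simp [hA, digraphIncid, hht]
            have hor : ∀ i, A i j ≠ 0 → f i = head (g j) ∨ f i = tail (g j) := by
              intro i hi
              by_contra hcon
              push_neg at hcon
              apply hi
              rw [hform i, if_neg hcon.1, if_neg hcon.2, sub_zero]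
            have key1 : ∀ (a : Fin (r+1)) (v : V), f a = v →
                ∑ i, (if f i = v then (1:ℝ) else 0) = 1 := by
              intro a v hav
              rw [Finset.sum_eq_single a]
              · simp [hav]
              · intro b _ hb
                rw [if_neg]
                intro hbv
                exact hb (hinj (hbv.trans hav.symm))
              · simp
            have hf12 : f i₁ ≠ f i₂ := fun hh => h12 (hinj hh)
            have hcases : (f i₁ = head (g j) ∧ f i₂ = tail (g j)) ∨
                (f i₁ = tail (g j) ∧ f i₂ = head (g j)) := by
              rcases hor i₁ hn1 with h1 | h1 <;> rcases hor i₂ hn2 with h2 | h2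
              · exact absurd (h1.trans h2.symm) hf12
              · exact Or.inl ⟨h1, h2⟩
              · exact Or.inr ⟨h1, h2⟩
              · exact absurd (h1.trans h2.symm) hf12
            have hsplit : ∑ i, A i j = (∑ i, (if f i = head (g j) then (1:ℝ) else 0)) -
                ∑ i, (if f i = tail (g j) then (1:ℝ) else 0) := by
              rw [← Finset.sum_sub_distrib]
              exact Finset.sum_congr rfl fun i _ => hform i
            rcases hcases with ⟨ha, hb⟩ | ⟨ha, hb⟩
            · rw [hsplit, key1 i₁ _ ha, key1 i₂ _ hb, sub_self]
            · rw [hsplit, key1 i₂ _ hb, key1 i₁ _ ha, sub_self]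
          have hdet : A.det = 0 := by
            rw [← Matrix.det_transpose, ← Matrix.exists_mulVec_eq_zero_iff]
            refine ⟨fun _ => 1, ?_, ?_⟩
            · intro hcon
              have := congrFun hcon 0
              norm_num at this
            · funext j
              simp only [Matrix.mulVec, dotProduct, Matrix.transpose_apply, mul_one,
                Pi.zero_apply]
              exact hsum j
          simp [hdet]
        · push_neg at hcols
          obtain ⟨j, hj⟩ := hcols
          by_cases hz : ∀ i, A i j = 0
          · simp [Matrix.det_eq_zero_of_column_eq_zero j hz]
          · push_neg at hz
            obtain ⟨i₀, hi₀⟩ := hz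
            have hzero : ∀ i, i ≠ i₀ → A i j = 0 := fun i hi => hj i₀ i (Ne.symm hi) hi₀
            rw [Matrix.det_succ_column A j, Finset.sum_eq_single i₀]
            · have h1 : A i₀ j = 1 ∨ A i₀ j = -1 := by
                rcases hmem i₀ j with h | h | h
                · exact absurd h hi₀
                · exact Or.inl h
                · exact Or.inr h
              have h2 : (A.submatrix i₀.succAbove j.succAbove).det ∈ ({0,1,-1} : Set ℝ) := by
                rw [hA, Matrix.submatrix_submatrix]
                exact ih _ _
              have h3 : (-1:ℝ) ^ ((i₀ : ℕ) + (j : ℕ)) = 1 ∨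
                  (-1:ℝ) ^ ((i₀ : ℕ) + (j : ℕ)) = -1 :=
                (Nat.even_or_odd _).imp (fun h => h.neg_one_pow) fun h => h.neg_one_pow
              simp only [Set.mem_insert_iff, Set.mem_singleton_iff] at h2 ⊢
              rcases h3 with h3 | h3 <;> rcases h1 with h1 | h1 <;>
                rcases h2 with h2 | h2 | h2 <;> rw [h3, h1, h2] <;> norm_num
            · intro b _ hb
              rw [hzero b hb]
              ring
            · intro hcon
              exact absurd (Finset.mem_univ i₀) hcon
      · rw [Function.not_injective_iff] at hinj
        obtain ⟨i₁, i₂, hfe, hne⟩ := hinj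
        have hdet : A.det = 0 :=
          Matrix.det_zero_of_row_eq hne (funext fun j => by simp [hA, hfe])
        simp [hdet]

lemma det_key {k : Type*} [Fintype k] [DecidableEq k] (f : k → V) (g : k → E) :
    ((digraphIncid tail head).submatrix f g).det ∈ ({0, 1, -1} : Set ℝ) := by
  have e := (Fintype.equivFin k).symm
  rw [← Matrix.det_submatrix_equiv_self e, Matrix.submatrix_submatrix]
  exact det_key_fin tail head _ _ _

end Helpers

lemma mem31_mem53 {x : ℝ} (h : x ∈ ({0,1,-1} : Set ℝ)) : x ∈ ({0,1,-1,2,-2} : Set ℝ) := by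
  simp only [Set.mem_insert_iff, Set.mem_singleton_iff] at *
  rcases h with rfl | rfl | rfl <;> norm_num

lemma sub_mem53 {x y : ℝ} (hx : x ∈ ({0,1,-1} : Set ℝ)) (hy : y ∈ ({0,1,-1} : Set ℝ)) :
    x - y ∈ ({0,1,-1,2,-2} : Set ℝ) := by
  simp only [Set.mem_insert_iff, Set.mem_singleton_iff] at *
  rcases hx with rfl | rfl | rfl <;> rcases hy with rfl | rfl | rfl <;> norm_num

lemma rank_submatrix_row_equiv {k m' n' : Type*} [Fintype k] [Fintype m'] [Fintype n']
    [DecidableEq n'] (e : k ≃ m') (A : Matrix m' n' ℝ) :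
    (A.submatrix ⇑e (id : n' → n')).rank = A.rank := by
  rw [show (id : n' → n') = ⇑(Equiv.refl n') from rfl]
  rw [Matrix.rank, Matrix.rank, Matrix.mulVecLin_submatrix, LinearMap.range_comp,
    LinearMap.range_comp,
    show LinearMap.funLeft ℝ ℝ ⇑(Equiv.refl n').symm
      = LinearEquiv.funCongrLeft ℝ ℝ (Equiv.refl n').symm from rfl,
    LinearEquiv.range, Submodule.map_top,
    show LinearMap.funLeft ℝ ℝ ⇑e = LinearEquiv.funCongrLeft ℝ ℝ e from rfl]
  exact LinearEquiv.finrank_map_eq _ _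

/-- Every network matrix is a tour matrix; more precisely, for every non-basic edge which is
not a loop of the directed graph there is a binet (bidirected graph) representation of the
network matrix in which that edge becomes a negative loop (its column has a single nonzero
entry, equal to ±2). -/
theorem networkMatrix_isTourMatrix {m n : Type*} [Fintype m] [DecidableEq m] [Fintype n]
    (tail head : m ⊕ n → Option m) (R : Matrix m m ℝ) (S : Matrix m n ℝ)
    (hR : R = (digraphIncid tail head).submatrix some Sum.inl)
    (hS : S = (digraphIncid tail head).submatrix some Sum.inr)
    (hRdet : IsUnit R.det) :
    IsTourMatrix (R⁻¹ * S) ∧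
    ∀ j₀ : n, head (Sum.inr j₀) ≠ tail (Sum.inr j₀) →
      ∃ (V : Type) (_ : Fintype V) (_ : DecidableEq V)
        (Q : Matrix V m ℝ) (S' : Matrix V n ℝ),
        IsBidirIncid Q ∧ IsBidirIncid S' ∧ Q * (R⁻¹ * S) = S' ∧
        Q.rank = Fintype.card V ∧
        ∃ v : V, (S' v j₀ = 2 ∨ S' v j₀ = -2) ∧ ∀ w, w ≠ v → S' w j₀ = 0 := by
  have hRB : R * (R⁻¹ * S) = S := by
    rw [← Matrix.mul_assoc, Matrix.mul_nonsing_inv R hRdet, Matrix.one_mul]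
  have hdet1 : R.det = 1 ∨ R.det = -1 := by
    have hd := det_key tail head some Sum.inl
    rw [← hR] at hd
    rcases hd with hh | hh | hh
    · exact absurd hh hRdet.ne_zero
    · exact Or.inl hh
    · exact Or.inr hh
  have habs_some : ∀ e : m ⊕ n, ∑ i : m, |digraphIncid tail head (some i) e| ≤ 2 := by
    intro e
    have h2 := digraphIncid_abs_sum tail head e
    rw [Fintype.sum_option] at h2
    have h3 := abs_nonneg (digraphIncid tail head (none : Option m) e)
    linarith
  have hBent : ∀ i j, (R⁻¹ * S) i j ∈ ({0,1,-1} : Set ℝ) := by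
    intro i j
    rw [Matrix.mul_apply, Matrix.inv_def]
    simp only [Matrix.smul_apply, smul_eq_mul]
    rw [show ∑ k, Ring.inverse R.det * R.adjugate i k * S k j
        = Ring.inverse R.det * ∑ k, R.adjugate i k * S k j by
      rw [Finset.mul_sum]; exact Finset.sum_congr rfl fun _ _ => by ring]
    have hcr : ∑ k, R.adjugate i k * S k j = (Matrix.cramer R (fun k => S k j)) i := by
      rw [Matrix.cramer_eq_adjugate_mulVec]
      simp [Matrix.mulVec, dotProduct]
    rw [hcr, Matrix.cramer_apply]
    have hupdate : R.updateCol i (fun k => S k j)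
        = (digraphIncid tail head).submatrix some
            (fun k => if k = i then Sum.inr j else Sum.inl k) := by
      ext a b
      rw [Matrix.updateCol_apply]
      by_cases hb : b = i <;> simp [hb, hR, hS]
    rw [hupdate, Ring.inverse_eq_inv]
    have hd := det_key tail head some (fun k : m => if k = i then Sum.inr j else Sum.inl k)
    simp only [Set.mem_insert_iff, Set.mem_singleton_iff] at hd ⊢
    rcases hdet1 with h1 | h1 <;> rw [h1] <;>
      rcases hd with hh | hh | hh <;> rw [hh] <;> norm_num
  constructor
  · refine ⟨hBent, Fin (Fintype.card m), inferInstance, inferInstance,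
      R.submatrix (Fintype.equivFin m).symm id, S.submatrix (Fintype.equivFin m).symm id,
      ⟨?_, ?_⟩, ⟨?_, ?_⟩, ?_, ?_⟩
    · intro x k
      apply mem31_mem53
      simp only [Matrix.submatrix_apply, id_eq, hR]
      exact digraphIncid_mem tail head _ _
    · intro k
      simp only [Matrix.submatrix_apply, id_eq, hR]
      calc ∑ x, |digraphIncid tail head (some ((Fintype.equivFin m).symm x)) (Sum.inl k)|
          = ∑ i : m, |digraphIncid tail head (some i) (Sum.inl k)| :=
            Equiv.sum_comp (Fintype.equivFin m).symm
              (fun i => |digraphIncid tail head (some i) (Sum.inl k)|)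
        _ ≤ 2 := habs_some _
    · intro x j
      apply mem31_mem53
      simp only [Matrix.submatrix_apply, id_eq, hS]
      exact digraphIncid_mem tail head _ _
    · intro j
      simp only [Matrix.submatrix_apply, id_eq, hS]
      calc ∑ x, |digraphIncid tail head (some ((Fintype.equivFin m).symm x)) (Sum.inr j)|
          = ∑ i : m, |digraphIncid tail head (some i) (Sum.inr j)| :=
            Equiv.sum_comp (Fintype.equivFin m).symm
              (fun i => |digraphIncid tail head (some i) (Sum.inr j)|)
        _ ≤ 2 := habs_some _
    · ext x j
      rw [Matrix.mul_apply]
      simp only [Matrix.submatrix_apply, id_eq]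
      have h1 := congrFun (congrFun hRB ((Fintype.equivFin m).symm x)) j
      rw [Matrix.mul_apply] at h1
      exact h1
    · rw [rank_submatrix_row_equiv,
        Matrix.rank_of_isUnit R ((Matrix.isUnit_iff_isUnit_det R).mpr hRdet), Fintype.card_fin]
  · intro j₀ hj₀
    set t := tail (Sum.inr j₀) with htdef
    set h := head (Sum.inr j₀) with hhdef
    -- hj₀ : h ≠ t
    set φ : m → Option m := fun i => if t = some i then none else some i with hφ
    have hφinj : Function.Injective φ := by
      intro a b hab
      simp only [hφ] at hab
      by_cases h1 : t = some a <;> by_cases h2 : t = some b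
      · exact Option.some_inj.mp (h1.symm.trans h2)
      · rw [if_pos h1, if_neg h2] at hab; exact absurd hab (by simp)
      · rw [if_neg h1, if_pos h2] at hab; exact absurd hab (by simp)
      · rw [if_neg h1, if_neg h2] at hab; exact Option.some_inj.mp hab
    have hφt : ∀ i, φ i ≠ t := by
      intro i
      simp only [hφ]
      split_ifs with h1
      · rw [h1]; simp
      · exact fun hh => h1 hh.symm
    obtain ⟨ih, hih⟩ : ∃ i, φ i = h := by
      cases hh : h with
      | none =>
        cases hht : t with
        | none => exact absurd (hh.trans hht.symm) hj₀
        | some t' => exact ⟨t', by simp [hφ, hht]⟩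
      | some h' =>
        refine ⟨h', ?_⟩
        simp only [hφ]
        rw [if_neg fun hc => hj₀ (hh.trans hc.symm)]
        try exact hh.symm
    have hφih : ∀ i, φ i = h ↔ i = ih := by
      intro i
      constructor
      · intro hi; exact hφinj (hi.trans hih.symm)
      · rintro rfl; exact hih
    set c : Option m → m → ℝ :=
      fun v i' => (if v = some i' then 1 else 0) - (if v = none then 1 else 0) with hc
    have hcrow : ∀ (v : Option m) (ed : m ⊕ n), digraphIncid tail head v ed
        = ∑ i', c v i' * digraphIncid tail head (some i') ed := by
      intro v ed
      cases v with
      | some a =>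
        have hstep : ∀ i' : m, c (some a) i' * digraphIncid tail head (some i') ed
            = if a = i' then digraphIncid tail head (some i') ed else 0 := by
          intro i'
          simp only [hc]
          split_ifs <;> simp_all
        rw [Finset.sum_congr rfl fun i' _ => hstep i']
        simp [Finset.sum_ite_eq]
      | none =>
        have h0 := digraphIncid_sum tail head ed
        rw [Fintype.sum_option] at h0
        have hstep : ∀ i' : m, c none i' * digraphIncid tail head (some i') ed
            = -(digraphIncid tail head (some i') ed) := by
          intro i'
          simp [hc]
        rw [Finset.sum_congr rfl fun i' _ => hstep i', Finset.sum_neg_distrib]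
        linarith
    set D : Matrix m m ℝ := fun i i' => c (φ i) i' - (if i = ih then c t i' else 0) with hD
    have hDrow : ∀ (i : m) (ed : m ⊕ n),
        ∑ i', D i i' * digraphIncid tail head (some i') ed
        = digraphIncid tail head (φ i) ed
          - (if i = ih then digraphIncid tail head t ed else 0) := by
      intro i ed
      simp only [hD, sub_mul, ite_mul, zero_mul]
      rw [Finset.sum_sub_distrib]
      congr 1
      · exact (hcrow (φ i) ed).symm
      · by_cases hx : i = ih
        · simp only [if_pos hx]
          exact (hcrow t ed).symm
        · simp [hx]
    set Q0 : Matrix m m ℝ := fun i k => digraphIncid tail head (φ i) (Sum.inl k)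
      - (if i = ih then digraphIncid tail head t (Sum.inl k) else 0) with hQ0
    set S0 : Matrix m n ℝ := fun i j => digraphIncid tail head (φ i) (Sum.inr j)
      - (if i = ih then digraphIncid tail head t (Sum.inr j) else 0) with hS0
    have hDR : D * R = Q0 := by
      ext i k
      rw [Matrix.mul_apply, hR, hQ0]
      simpa using hDrow i (Sum.inl k)
    have hDS : D * S = S0 := by
      ext i j
      rw [Matrix.mul_apply, hS, hS0]
      simpa using hDrow i (Sum.inr j)
    have hDdet : IsUnit D.det := by
      rw [isUnit_iff_ne_zero, Ne, ← Matrix.exists_vecMul_eq_zero_iff]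
      rintro ⟨v, hv0, hv⟩
      apply hv0
      have hveq : ∀ i', ∑ i, v i * D i i' = 0 := by
        intro i'
        have hcf := congrFun hv i'
        simpa [Matrix.vecMul, dotProduct] using hcf
      have hcsome : ∀ (a : m) i', c (some a) i' = if a = i' then (1:ℝ) else 0 := by
        intro a i'; simp [hc]
      have hcnone : ∀ i', c (none : Option m) i' = (-1:ℝ) := by intro i'; simp [hc]
      cases hht : t with
      | none =>
        have hφi : ∀ i : m, φ i = some i := fun i => by simp [hφ, hht]
        have hDval : ∀ i i', D i i' = (if i = i' then (1:ℝ) else 0)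
            + (if i = ih then 1 else 0) := by
          intro i i'
          simp only [hD]
          rw [hφi i, hcsome, hht, hcnone]
          split_ifs <;> norm_num
        have hvi : ∀ i', v i' + v ih = 0 := by
          intro i'
          have hq := hveq i'
          rw [show (∑ i, v i * D i i')
              = ∑ i, v i * ((if i = i' then (1:ℝ) else 0) + if i = ih then 1 else 0) from
            Finset.sum_congr rfl fun i _ => by rw [hDval i i']] at hq
          simp only [mul_add, mul_ite, mul_one, mul_zero, Finset.sum_add_distrib,
            Finset.sum_ite_eq', Finset.mem_univ, if_true] at hq
          exact hq
        have hih0 : v ih = 0 := by have h5 := hvi ih; linarith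
        funext i
        have h5 := hvi i
        rw [hih0] at h5
        simpa using h5
      | some t' =>
        have hφi : ∀ i : m, i ≠ t' → φ i = some i := by
          intro i hi
          simp only [hφ]
          rw [if_neg]
          intro hc2
          exact hi (Option.some_inj.mp (hht.symm.trans hc2)).symm
        have hφt' : φ t' = none := by simp [hφ, hht]
        have hDval : ∀ i i', D i i' = (if i = t' then (-1:ℝ) else if i = i' then 1 else 0)
            - (if i = ih then (if t' = i' then 1 else 0) else 0) := by
          intro i i'
          simp only [hD]
          by_cases hi : i = t'
          · rw [hi, hφt', hcnone, hht, hcsome, if_pos rfl]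
          · rw [hφi i hi, hcsome, hht, hcsome, if_neg hi]
        have hsum1 : ∀ i', ∑ i, v i * (if i = t' then (-1:ℝ) else if i = i' then 1 else 0)
            = -v t' + (if i' = t' then 0 else v i') := by
          intro i'
          rw [← Finset.add_sum_erase _ _ (Finset.mem_univ t')]
          have e1 : v t' * (if t' = t' then (-1:ℝ) else if t' = i' then 1 else 0) = -v t' := by
            simp
          rw [e1]
          congr 1
          have e2 : ∀ i ∈ Finset.univ.erase t',
              v i * (if i = t' then (-1:ℝ) else if i = i' then 1 else 0)
              = if i = i' then v i else 0 := by
            intro i hi2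
            rw [if_neg (Finset.mem_erase.mp hi2).1]
            split_ifs <;> ring
          rw [Finset.sum_congr rfl e2, Finset.sum_ite_eq' (Finset.univ.erase t') i' v]
          by_cases hit : i' = t'
          · simp [hit]
          · simp [hit, Finset.mem_erase]
        have h3 : ∀ i', ∑ i, v i * (if i = ih then (if t' = i' then (1:ℝ) else 0) else 0)
            = v ih * (if t' = i' then 1 else 0) := by
          intro i'
          have e3 : ∀ i, v i * (if i = ih then (if t' = i' then (1:ℝ) else 0) else 0)
              = if i = ih then v i * (if t' = i' then (1:ℝ) else 0) else 0 := by
            intro i; split_ifs <;> ring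
          rw [Finset.sum_congr rfl fun i _ => e3 i, Finset.sum_ite_eq' Finset.univ ih
            (fun i => v i * (if t' = i' then (1:ℝ) else 0))]
          simp
        have heq : ∀ i', -v t' + (if i' = t' then 0 else v i')
            - v ih * (if t' = i' then 1 else 0) = 0 := by
          intro i'
          have hq := hveq i'
          rw [show (∑ i, v i * D i i')
              = ∑ i, v i * ((if i = t' then (-1:ℝ) else if i = i' then 1 else 0)
                - (if i = ih then (if t' = i' then 1 else 0) else 0)) from
            Finset.sum_congr rfl fun i _ => by rw [hDval i i']] at hq
          rw [show (∑ i, v i * ((if i = t' then (-1:ℝ) else if i = i' then 1 else 0)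
                - (if i = ih then (if t' = i' then 1 else 0) else 0)))
              = (∑ i, v i * (if i = t' then (-1:ℝ) else if i = i' then 1 else 0))
                - ∑ i, v i * (if i = ih then (if t' = i' then (1:ℝ) else 0) else 0) by
            rw [← Finset.sum_sub_distrib]
            exact Finset.sum_congr rfl fun i _ => by ring] at hq
          rw [hsum1 i', h3 i'] at hq
          exact hq
        have ht'eq : v t' = -v ih := by
          have hq := heq t'
          simp at hq
          linarith
        have hother : ∀ i', i' ≠ t' → v i' = v t' := by
          intro i' hi'
          have hq := heq i'
          rw [if_neg hi', if_neg (fun hc2 => hi' hc2.symm), mul_zero] at hq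
          linarith
        have hihv : v ih = 0 := by
          by_cases hcase : ih = t'
          · rw [hcase] at ht'eq ⊢; linarith
          · have h4 := hother ih hcase
            linarith
        funext i
        show v i = 0
        by_cases hi : i = t'
        · rw [hi, ht'eq, hihv]; norm_num
        · rw [hother i hi, ht'eq, hihv]; norm_num
    have habsQ0 : ∀ ed : m ⊕ n,
        ∑ i : m, |digraphIncid tail head (φ i) ed
          - (if i = ih then digraphIncid tail head t ed else 0)| ≤ 2 := by
      intro ed
      have step1 : ∀ i : m, |digraphIncid tail head (φ i) ed
          - (if i = ih then digraphIncid tail head t ed else 0)|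
          ≤ |digraphIncid tail head (φ i) ed|
            + (if i = ih then |digraphIncid tail head t ed| else 0) := by
        intro i
        split_ifs
        · exact abs_sub _ _
        · simp
      have step2 : ∑ i : m, (|digraphIncid tail head (φ i) ed|
          + (if i = ih then |digraphIncid tail head t ed| else 0))
          = (∑ i : m, |digraphIncid tail head (φ i) ed|) + |digraphIncid tail head t ed| := by
        rw [Finset.sum_add_distrib]
        congr 1
        rw [Finset.sum_ite_eq' Finset.univ ih (fun _ => |digraphIncid tail head t ed|)]
        simp
      have step3 : (∑ i : m, |digraphIncid tail head (φ i) ed|) + |digraphIncid tail head t ed|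
          ≤ ∑ v : Option m, |digraphIncid tail head v ed| := by
        have himg : ∑ i : m, |digraphIncid tail head (φ i) ed|
            = ∑ v ∈ Finset.univ.image φ, |digraphIncid tail head v ed| :=
          (Finset.sum_image (f := fun v => |digraphIncid tail head v ed|) (g := φ)
            (s := Finset.univ) fun a _ b _ hab => hφinj hab).symm
        have hts : t ∉ Finset.univ.image φ := by
          simp only [Finset.mem_image, Finset.mem_univ, true_and]
          rintro ⟨i, hi⟩
          exact hφt i hi
        have hins : |digraphIncid tail head t ed|
            + ∑ v ∈ Finset.univ.image φ, |digraphIncid tail head v ed|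
            = ∑ v ∈ insert t (Finset.univ.image φ), |digraphIncid tail head v ed| :=
          (Finset.sum_insert (f := fun v => |digraphIncid tail head v ed|) hts).symm
        rw [himg, add_comm, hins]
        exact Finset.sum_le_sum_of_subset_of_nonneg (Finset.subset_univ _)
          (fun _ _ _ => abs_nonneg _)
      calc ∑ i : m, |digraphIncid tail head (φ i) ed
            - (if i = ih then digraphIncid tail head t ed else 0)|
          ≤ ∑ i : m, (|digraphIncid tail head (φ i) ed|
            + (if i = ih then |digraphIncid tail head t ed| else 0)) :=
            Finset.sum_le_sum fun i _ => step1 i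
        _ ≤ ∑ v : Option m, |digraphIncid tail head v ed| := by rw [step2]; exact step3
        _ ≤ 2 := digraphIncid_abs_sum tail head ed
    have hN : ∀ v : Option m, digraphIncid tail head v (Sum.inr j₀)
        = (if v = h then (1:ℝ) else 0) - (if v = t then 1 else 0) := by
      intro v
      rw [show digraphIncid tail head v (Sum.inr j₀)
          = if head (Sum.inr j₀) = tail (Sum.inr j₀) then (0:ℝ)
            else (if v = head (Sum.inr j₀) then 1 else 0)
              - (if v = tail (Sum.inr j₀) then 1 else 0) from rfl]
      rw [← hhdef, ← htdef, if_neg hj₀]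
    set e := (Fintype.equivFin m).symm with he
    refine ⟨Fin (Fintype.card m), inferInstance, inferInstance,
      Q0.submatrix ⇑e id, S0.submatrix ⇑e id, ⟨?_, ?_⟩, ⟨?_, ?_⟩, ?_, ?_, ?_⟩
    · intro x k
      simp only [Matrix.submatrix_apply, id_eq, hQ0]
      refine sub_mem53 (digraphIncid_mem tail head _ _) ?_
      split_ifs
      · exact digraphIncid_mem tail head _ _
      · simp
    · intro k
      simp only [Matrix.submatrix_apply, id_eq, hQ0]
      calc (∑ x : Fin (Fintype.card m), |digraphIncid tail head (φ (e x)) (Sum.inl k)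
            - (if e x = ih then digraphIncid tail head t (Sum.inl k) else 0)|)
          = ∑ i : m, |digraphIncid tail head (φ i) (Sum.inl k)
            - (if i = ih then digraphIncid tail head t (Sum.inl k) else 0)| :=
            Equiv.sum_comp e (fun i => |digraphIncid tail head (φ i) (Sum.inl k)
              - (if i = ih then digraphIncid tail head t (Sum.inl k) else 0)|)
        _ ≤ 2 := habsQ0 _
    · intro x j
      simp only [Matrix.submatrix_apply, id_eq, hS0]
      refine sub_mem53 (digraphIncid_mem tail head _ _) ?_
      split_ifs
      · exact digraphIncid_mem tail head _ _
      · simp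
    · intro j
      simp only [Matrix.submatrix_apply, id_eq, hS0]
      calc (∑ x : Fin (Fintype.card m), |digraphIncid tail head (φ (e x)) (Sum.inr j)
            - (if e x = ih then digraphIncid tail head t (Sum.inr j) else 0)|)
          = ∑ i : m, |digraphIncid tail head (φ i) (Sum.inr j)
            - (if i = ih then digraphIncid tail head t (Sum.inr j) else 0)| :=
            Equiv.sum_comp e (fun i => |digraphIncid tail head (φ i) (Sum.inr j)
              - (if i = ih then digraphIncid tail head t (Sum.inr j) else 0)|)
        _ ≤ 2 := habsQ0 _
    · ext x j
      rw [Matrix.mul_apply]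
      simp only [Matrix.submatrix_apply, id_eq]
      have h1 : (Q0 * (R⁻¹ * S)) (e x) j = S0 (e x) j := by
        rw [← hDR, Matrix.mul_assoc, hRB, hDS]
      rw [Matrix.mul_apply] at h1
      exact h1
    · rw [rank_submatrix_row_equiv, ← hDR,
        Matrix.rank_mul_eq_left_of_isUnit_det R D hRdet,
        Matrix.rank_of_isUnit D ((Matrix.isUnit_iff_isUnit_det D).mpr hDdet), Fintype.card_fin]
    · refine ⟨e.symm ih, Or.inl ?_, ?_⟩
      · simp only [Matrix.submatrix_apply, id_eq, Equiv.apply_symm_apply, hS0, Matrix.submatrix,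
          Matrix.of_apply]
        have hz1 : digraphIncid tail head h (Sum.inr j₀) = 1 := by
          rw [hN, if_pos rfl, if_neg hj₀]
          norm_num
        have hz2 : digraphIncid tail head t (Sum.inr j₀) = -1 := by
          rw [hN, if_neg (fun hc2 : t = h => hj₀ hc2.symm), if_pos rfl]
          norm_num
        rw [hih, hz1, if_pos trivial, hz2]
        norm_num
      · intro w hw
        simp only [Matrix.submatrix_apply, id_eq, hS0, Matrix.submatrix, Matrix.of_apply]
        have hwne : e w ≠ ih := fun hc2 => hw (by rw [← hc2, Equiv.symm_apply_apply])
        have hz1 : digraphIncid tail head (φ (e w)) (Sum.inr j₀) = 0 := by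
          rw [hN, if_neg (fun hc2 => hwne ((hφih _).mp hc2)), if_neg (hφt _)]
          norm_num
        rw [if_neg hwne, hz1, sub_zero]
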